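/- Consider a pDLS instance and, for each chain P ∈ 𝒫, a suffix chain Ŝ^P = (Ŝ^P_1,…,Ŝ^P_k). Suppose that for every i ∈ [k] the coverage condition ∑_{P∈𝒫} ∑_{j ∈ Ŝ^P_i} p_j ≥ Γ − D_i holds. Then there exists a feasible schedule (a bijection σ : [n] → [n] with σ(j) ≤ σ(j') whenever j ⪯ j' on a common chain) such that every job j that is late under σ (i.e. whose completion time C_j = ∑_{j' : σ(j') ≤ σ(j)} p_{j'} exceeds d_j) belongs to Ŝ^P_{i(j)}, where P is the chain containing j. In particular the total penalty of this schedule is at most ∑_{P∈𝒫} ∑_{j ∈ P : j ∈ Ŝ^P_{i(j)}} w_j. -/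
import Mathlib


/-- Consider a pDLS instance whose jobs are partitioned into chains
`P ∈ Fin q` with jobs `Fin (m P)` (ordered by `⪯` = the order on `Fin (m P)`), with
processing times `p`, penalties `w`, deadlines `d j = D (iop j)` where
`D : Fin k → ℕ` is strictly increasing.  For each chain `P` let
`Ŝ^P = (Ŝ^P_1,…,Ŝ^P_k)` be a suffix chain, encoded by monotone starting points
`S P : Fin k → Fin (m P + 1)`, so that `Ŝ^P_i = {j : S P i ≤ j.castSucc}`.
If for every `i ∈ [k]` the coverage condition
`∑_{P} ∑_{j ∈ Ŝ^P_i} p_j ≥ Γ − D_i` holds (`Γ` = total processing time), then there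
is a feasible schedule (a bijection `σ` to `Fin n` respecting each chain's order) such
that every job `j` late under `σ` (completion time `C_j = ∑_{j' : σ j' ≤ σ j} p_{j'}`
exceeds `d_j`) lies in `Ŝ^P_{i(j)}`; in particular its total penalty is at most
`∑_P ∑_{j ∈ P : j ∈ Ŝ^P_{i(j)}} w_j`. -/
theorem stmt11 (q k : ℕ) (m : Fin q → ℕ)
    (p w d : (Σ P : Fin q, Fin (m P)) → ℕ)
    (D : Fin k → ℕ) (hD : StrictMono D)
    (iop : (Σ P : Fin q, Fin (m P)) → Fin k)
    (hd : ∀ j, d j = D (iop j))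
    (S : (P : Fin q) → Fin k → Fin (m P + 1))
    (hS : ∀ (P : Fin q) (i i' : Fin k), i ≤ i' → S P i ≤ S P i')
    (hcov : ∀ i : Fin k,
      (∑ j : Σ P : Fin q, Fin (m P), (p j : ℤ)) - (D i : ℤ) ≤
        ∑ P : Fin q, ∑ j ∈ Finset.univ.filter (fun j : Fin (m P) => S P i ≤ j.castSucc),
          (p ⟨P, j⟩ : ℤ)) :
    ∃ σ : (Σ P : Fin q, Fin (m P)) ≃ Fin (∑ P : Fin q, m P),
      (∀ (P : Fin q) (a b : Fin (m P)), a ≤ b → σ ⟨P, a⟩ ≤ σ ⟨P, b⟩) ∧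
      (∀ j : Σ P : Fin q, Fin (m P),
        d j < (∑ j' ∈ Finset.univ.filter (fun j' => σ j' ≤ σ j), p j') →
          S j.1 (iop j) ≤ (j.2).castSucc) ∧
      (∑ j ∈ Finset.univ.filter
          (fun j : Σ P : Fin q, Fin (m P) =>
            d j < ∑ j' ∈ Finset.univ.filter (fun j' => σ j' ≤ σ j), p j'), w j)
        ≤ ∑ P : Fin q, ∑ j ∈ Finset.univ.filter
            (fun j : Fin (m P) => S P (iop ⟨P, j⟩) ≤ j.castSucc), w ⟨P, j⟩ := by
  classical
  -- the "key" of a job: number of indices i whose suffix contains it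
  set key : (Σ P : Fin q, Fin (m P)) → ℕ :=
    fun j => (Finset.univ.filter (fun i : Fin k => S j.1 i ≤ j.2.castSucc)).card with hkey
  have hkey_iff : ∀ (j : (Σ P : Fin q, Fin (m P))) (i : Fin k), S j.1 i ≤ j.2.castSucc ↔ i.val < key j := by
    intro j i
    constructor
    · intro h
      have hsub : Finset.Iic i ⊆
          Finset.univ.filter (fun i' : Fin k => S j.1 i' ≤ j.2.castSucc) := by
        intro i' hi'
        simp only [Finset.mem_Iic] at hi'
        simp only [Finset.mem_filter, Finset.mem_univ, true_and]
        exact le_trans (hS j.1 i' i hi') h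
      have := Finset.card_le_card hsub
      rw [Fin.card_Iic] at this
      simp only [hkey]
      omega
    · intro h
      by_contra hc
      have hsub : Finset.univ.filter (fun i' : Fin k => S j.1 i' ≤ j.2.castSucc) ⊆
          Finset.Iio i := by
        intro i' hi'
        simp only [Finset.mem_filter, Finset.mem_univ, true_and] at hi'
        simp only [Finset.mem_Iio]
        by_contra hge
        exact hc (le_trans (hS j.1 i i' (not_lt.1 hge)) hi')
      have := Finset.card_le_card hsub
      rw [Fin.card_Iio] at this
      simp only [hkey] at h
      omega
  -- key is monotone along a chain
  have hkey_mono : ∀ (P : Fin q) (a b : Fin (m P)), a ≤ b → key ⟨P, a⟩ ≤ key ⟨P, b⟩ := by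
    intro P a b hab
    apply Finset.card_le_card
    intro i hi
    simp only [Finset.mem_filter, Finset.mem_univ, true_and] at hi ⊢
    exact le_trans hi (Fin.castSucc_le_castSucc_iff.mpr hab)
  -- encode jobs into ℕ
  set n : ℕ := ∑ P : Fin q, m P with hn
  set M : ℕ := n + 1 with hM
  set C : ℕ := q * M + 1 with hC
  have hmle : ∀ P : Fin q, m P ≤ n := by
    intro P
    exact Finset.single_le_sum (f := m) (fun _ _ => Nat.zero_le _) (Finset.mem_univ P)
  set e : (Σ P : Fin q, Fin (m P)) → ℕ := fun j => j.1.val * M + j.2.val with he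
  have heC : ∀ j : (Σ P : Fin q, Fin (m P)), e j < C := by
    intro j
    have h2 : j.2.val < M := lt_of_lt_of_le j.2.isLt (le_trans (hmle j.1) (Nat.le_succ n))
    have h1 : j.1.val + 1 ≤ q := j.1.isLt
    calc e j = j.1.val * M + j.2.val := rfl
      _ < j.1.val * M + M := by omega
      _ = (j.1.val + 1) * M := by ring
      _ ≤ q * M := Nat.mul_le_mul_right M h1
      _ < C := hC ▸ Nat.lt_succ_self _
  set r : (Σ P : Fin q, Fin (m P)) → ℕ := fun j => key j * C + e j with hr
  have hr_key : ∀ j j' : (Σ P : Fin q, Fin (m P)), r j' ≤ r j → key j' ≤ key j := by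
    intro j j' h
    have h1 := heC j
    have h2 := heC j'
    by_contra hc
    push_neg at hc
    have : (key j + 1) * C ≤ key j' * C := Nat.mul_le_mul_right C hc
    simp only [hr] at h
    nlinarith
  have hr_inj : Function.Injective r := by
    rintro ⟨P, a⟩ ⟨P', a'⟩ hjj
    have h1 := heC ⟨P, a⟩
    have h2 := heC ⟨P', a'⟩
    have hk : key ⟨P, a⟩ = key ⟨P', a'⟩ :=
      le_antisymm (hr_key ⟨P', a'⟩ ⟨P, a⟩ (le_of_eq hjj))
        (hr_key ⟨P, a⟩ ⟨P', a'⟩ (le_of_eq hjj.symm))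
    have hee : e ⟨P, a⟩ = e ⟨P', a'⟩ := by simp only [hr, hk] at hjj; omega
    have hMa : a.val < M := lt_of_lt_of_le a.isLt (le_trans (hmle P) (Nat.le_succ n))
    have hMa' : a'.val < M := lt_of_lt_of_le a'.isLt (le_trans (hmle P') (Nat.le_succ n))
    simp only [he] at hee
    have h1eq : P.val = P'.val := by
      rcases lt_trichotomy P.val P'.val with h | h | h
      · nlinarith
      · exact h
      · nlinarith
    have hPP : P = P' := Fin.ext h1eq
    subst hPP
    have h2eq : a.val = a'.val := by omega
    exact congrArg (Sigma.mk P) (Fin.ext h2eq)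
  -- build σ from r
  have hcardJ : Fintype.card (Σ P : Fin q, Fin (m P)) = n := by
    simp [hn, Fintype.card_sigma]
  set s : Finset ℕ := Finset.univ.image r with hs
  have hscard : s.card = n := by
    rw [hs, Finset.card_image_of_injective _ hr_inj, Finset.card_univ, hcardJ]
  set oi := s.orderIsoOfFin hscard with hoi
  set f : (Σ P : Fin q, Fin (m P)) → Fin n := fun j => oi.symm ⟨r j, by simp [hs]⟩ with hf
  have hf_inj : Function.Injective f := by
    intro j j' h
    have := oi.symm.injective h
    exact hr_inj (Subtype.ext_iff.1 (oi.symm.injective h))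
  have hf_bij : Function.Bijective f :=
    (Fintype.bijective_iff_injective_and_card f).2 ⟨hf_inj, by simp [hcardJ]⟩
  have hfle : ∀ j j' : (Σ P : Fin q, Fin (m P)), f j ≤ f j' ↔ r j ≤ r j' := by
    intro j j'
    simp only [hf]
    rw [oi.symm.le_iff_le]
    exact Subtype.mk_le_mk
  -- sigma-sum reindexing
  have hsig : ∀ {α : Type} [AddCommMonoid α] (F : (Σ P : Fin q, Fin (m P)) → α) (φ : (Σ P : Fin q, Fin (m P)) → Fin k),
      ∑ j' ∈ Finset.univ.filter (fun j' : (Σ P : Fin q, Fin (m P)) => S j'.1 (φ j') ≤ j'.2.castSucc), F j' =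
      ∑ P : Fin q, ∑ j ∈ Finset.univ.filter
          (fun j : Fin (m P) => S P (φ ⟨P, j⟩) ≤ j.castSucc), F ⟨P, j⟩ := by
    intro α _ F φ
    rw [Finset.sum_filter, ← Finset.univ_sigma_univ, Finset.sum_sigma]
    congr 1
    ext P
    rw [Finset.sum_filter]
  -- the late-job property
  have hlate : ∀ j : (Σ P : Fin q, Fin (m P)),
      d j < (∑ j' ∈ Finset.univ.filter (fun j' => f j' ≤ f j), p j') →
        S j.1 (iop j) ≤ (j.2).castSucc := by
    intro j hj
    by_contra hno
    have hkj : key j ≤ (iop j).val := by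
      by_contra hkc
      push_neg at hkc
      exact hno ((hkey_iff j (iop j)).2 hkc)
    have hsubs : Finset.univ.filter (fun j' : (Σ P : Fin q, Fin (m P)) => f j' ≤ f j) ⊆
        Finset.univ.filter (fun j' : (Σ P : Fin q, Fin (m P)) => ¬ S j'.1 (iop j) ≤ j'.2.castSucc) := by
      intro j' hj'
      simp only [Finset.mem_filter, Finset.mem_univ, true_and] at hj' ⊢
      have hrle : r j' ≤ r j := (hfle j' j).1 hj'
      have hkle : key j' ≤ key j := hr_key j j' hrle
      intro hcon
      have := (hkey_iff j' (iop j)).1 hcon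
      omega
    have h1 : (∑ j' ∈ Finset.univ.filter (fun j' : (Σ P : Fin q, Fin (m P)) => f j' ≤ f j), p j') ≤
        ∑ j' ∈ Finset.univ.filter (fun j' : (Σ P : Fin q, Fin (m P)) => ¬ S j'.1 (iop j) ≤ j'.2.castSucc), p j' :=
      Finset.sum_le_sum_of_subset hsubs
    have h2 : (∑ j' ∈ Finset.univ.filter
          (fun j' : (Σ P : Fin q, Fin (m P)) => ¬ S j'.1 (iop j) ≤ j'.2.castSucc), (p j' : ℤ)) ≤ (D (iop j) : ℤ) := by
      have hc := hcov (iop j)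
      rw [← hsig (fun j' : (Σ P : Fin q, Fin (m P)) => (p j' : ℤ)) (fun _ => iop j)] at hc
      have hsplit := Finset.sum_filter_add_sum_filter_not (Finset.univ : Finset (Σ P : Fin q, Fin (m P)))
        (fun j' : (Σ P : Fin q, Fin (m P)) => S j'.1 (iop j) ≤ j'.2.castSucc) (fun j' : (Σ P : Fin q, Fin (m P)) => (p j' : ℤ))
      linarith
    have h2' : (∑ j' ∈ Finset.univ.filter
          (fun j' : (Σ P : Fin q, Fin (m P)) => ¬ S j'.1 (iop j) ≤ j'.2.castSucc), p j') ≤ D (iop j) := by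
      exact_mod_cast h2
    rw [hd j] at hj
    omega
  refine ⟨Equiv.ofBijective f hf_bij, ?_, ?_, ?_⟩
  · -- chain-order feasibility
    intro P a b hab
    simp only [Equiv.ofBijective_apply]
    rw [hfle]
    have hk : key ⟨P, a⟩ ≤ key ⟨P, b⟩ := hkey_mono P a b hab
    have hev : e ⟨P, a⟩ ≤ e ⟨P, b⟩ := by
      simp only [he]
      have : a.val ≤ b.val := hab
      omega
    exact Nat.add_le_add (Nat.mul_le_mul_right C hk) hev
  · -- late jobs lie in the suffix
    intro j hj
    exact hlate j (by simpa only [Equiv.ofBijective_apply] using hj)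
  · -- penalty bound
    rw [← hsig w iop]
    apply Finset.sum_le_sum_of_subset
    intro j hj
    simp only [Finset.mem_filter, Finset.mem_univ, true_and, Equiv.ofBijective_apply] at hj ⊢
    exact hlate j hj
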